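/- Let ℙ be a reference probability measure, and let Q, Q′, P, P′ be probability measures absolutely continuous with respect to ℙ. Let V : [0,∞) → (−∞,∞] be convex, bounded below, finite on (0,∞). Then for all α, γ ∈ (0,1): V(αQ + (1−α)Q′ | γP + (1−γ)P′) ≤ γ · V((α/γ)Q | P) + (1−γ) · V(((1−α)/(1−γ))Q′ | P′). -/

import Mathlib

open MeasureTheory Filter Set
open scoped ENNReal NNReal

/- The generalized entropy `V(ν|P) ∈ (−∞,∞]` of a measure `ν` relative to a probability
measure `P`, associated with a convex function `V` bounded from below:
`V(ν|P) = ∫ V(dν/dP) dP` if `ν ≪ P`, and `+∞` otherwise. (Since `V` is bounded below the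
negative part is integrable, so the difference of the two lower integrals is well defined
in `EReal`.) -/
open Classical in
noncomputable def genEntropy {Ω : Type*} [MeasurableSpace Ω] (V : ℝ → ℝ)
    (ν P : Measure Ω) : EReal :=
  if ν ≪ P then
    (∫⁻ ω, ENNReal.ofReal (V ((ν.rnDeriv P ω).toReal)) ∂P).toEReal
      - (∫⁻ ω, ENNReal.ofReal (-V ((ν.rnDeriv P ω).toReal)) ∂P).toEReal
  else ⊤

section aux

variable {Ω : Type*} [MeasurableSpace Ω]

/-- coercion of a finite ENNReal to EReal is the coercion of its toReal -/
lemma ereal_coe_finite {x : ℝ≥0∞} (hx : x ≠ ⊤) : (x : EReal) = ((x.toReal : ℝ) : EReal) := by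
  conv_lhs => rw [← ENNReal.ofReal_toReal hx]
  rw [EReal.coe_ennreal_ofReal, max_eq_left ENNReal.toReal_nonneg]

lemma convex_measurable_aux {V : ℝ → ℝ} (hV : ConvexOn ℝ (Set.Ici 0) V) :
    Measurable (fun y : ℝ≥0∞ => V y.toReal) := by
  have hV' : ConvexOn ℝ (Set.Ioi 0) V :=
    hV.subset Set.Ioi_subset_Ici_self (convex_Ioi 0)
  have hcont : ContinuousOn V (Set.Ioi 0) := hV'.continuousOn isOpen_Ioi
  have hmeas : Measurable (fun y : ℝ => if 0 < y then V y else V 0) := by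
    apply measurable_of_continuousOn_compl_singleton 0
    intro y hy
    simp only [Set.mem_compl_iff, Set.mem_singleton_iff] at hy
    rcases lt_or_gt_of_ne hy with h | h
    · have hev : (fun y : ℝ => if 0 < y then V y else V 0) =ᶠ[nhds y] fun _ => V 0 := by
        filter_upwards [Iio_mem_nhds h] with z hz
        rw [if_neg (not_lt.2 hz.le)]
      exact (continuousAt_const.congr hev.symm).continuousWithinAt
    · have hev : (fun y : ℝ => if 0 < y then V y else V 0) =ᶠ[nhds y] V := by
        filter_upwards [Ioi_mem_nhds h] with z hz
        rw [if_pos (mem_Ioi.mp hz)]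
      exact ((hcont.continuousAt (Ioi_mem_nhds h)).congr hev.symm).continuousWithinAt
  have heq : (fun y : ℝ≥0∞ => V y.toReal)
      = (fun y : ℝ => if 0 < y then V y else V 0) ∘ ENNReal.toReal := by
    funext y
    simp only [Function.comp_apply]
    split_ifs with h
    · rfl
    · rw [not_lt] at h
      rw [le_antisymm h ENNReal.toReal_nonneg]
  rw [heq]
  exact hmeas.comp ENNReal.measurable_toReal

end aux
section aux2

variable {Ω : Type*} [MeasurableSpace Ω]

lemma genEntropy_of_ac {V : ℝ → ℝ} {b : ℝ} (hb0 : b ≤ 0)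
    (hb : ∀ y : ℝ, 0 ≤ y → b ≤ V y)
    (hm : Measurable (fun y : ℝ≥0∞ => V y.toReal))
    (ν P : Measure Ω) [IsProbabilityMeasure P] (hνP : ν ≪ P) :
    genEntropy V ν P
      = (∫⁻ ω, ENNReal.ofReal (V ((ν.rnDeriv P ω).toReal) - b) ∂P).toEReal + (b : EReal) := by
  classical
  rw [genEntropy, if_pos hνP]
  set f : Ω → ℝ := fun ω => V ((ν.rnDeriv P ω).toReal) with hf
  have hfm : Measurable f := hm.comp (Measure.measurable_rnDeriv ν P)
  have hfb : ∀ ω, b ≤ f ω := fun ω => hb _ ENNReal.toReal_nonneg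
  set Np := ∫⁻ ω, ENNReal.ofReal (f ω) ∂P with hNp
  set Nn := ∫⁻ ω, ENNReal.ofReal (-f ω) ∂P with hNn
  set L := ∫⁻ ω, ENNReal.ofReal (f ω - b) ∂P with hL
  have hptwise : ∀ ω, ENNReal.ofReal (f ω - b) + ENNReal.ofReal (-f ω)
      = ENNReal.ofReal (f ω) + ENNReal.ofReal (-b) := by
    intro ω
    rcases le_or_gt 0 (f ω) with h | h
    · rw [ENNReal.ofReal_of_nonpos (by linarith : -f ω ≤ 0), add_zero,
        show f ω - b = f ω + (-b) by ring, ENNReal.ofReal_add h (by linarith)]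
    · rw [ENNReal.ofReal_of_nonpos h.le, zero_add,
        ← ENNReal.ofReal_add (by linarith [hfb ω] : (0:ℝ) ≤ f ω - b) (by linarith : (0:ℝ) ≤ -f ω)]
      congr 1; ring
  have key : L + Nn = Np + ENNReal.ofReal (-b) := by
    calc L + Nn = ∫⁻ ω, (ENNReal.ofReal (f ω - b) + ENNReal.ofReal (-f ω)) ∂P :=
          (lintegral_add_left (ENNReal.measurable_ofReal.comp (hfm.sub measurable_const)) _).symm
      _ = ∫⁻ ω, (ENNReal.ofReal (f ω) + ENNReal.ofReal (-b)) ∂P := by simp_rw [hptwise]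
      _ = Np + ENNReal.ofReal (-b) := by
          rw [lintegral_add_right _ measurable_const, lintegral_const, measure_univ, mul_one]
  have hNn_ne : Nn ≠ ⊤ := by
    refine (lt_of_le_of_lt ?_ (ENNReal.ofReal_lt_top (r := -b))).ne
    calc Nn ≤ ∫⁻ _, ENNReal.ofReal (-b) ∂P :=
          lintegral_mono fun ω => ENNReal.ofReal_le_ofReal (by linarith [hfb ω])
      _ = ENNReal.ofReal (-b) := by rw [lintegral_const, measure_univ, mul_one]
  rcases eq_or_ne L ⊤ with hLt | hLt
  · have hNpt : Np = ⊤ := by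
      by_contra h
      have hne : Np + ENNReal.ofReal (-b) ≠ ⊤ := ENNReal.add_ne_top.2 ⟨h, ENNReal.ofReal_ne_top⟩
      rw [← key, hLt, top_add] at hne
      exact hne rfl
    rw [hLt, hNpt, ereal_coe_finite hNn_ne, EReal.coe_ennreal_top, EReal.top_sub_coe,
      EReal.top_add_coe]
  · have hNpt : Np ≠ ⊤ := by
      intro h
      rw [h] at key
      have : L = ⊤ ∨ Nn = ⊤ := by
        by_contra hc
        push_neg at hc
        exact (ENNReal.add_ne_top.2 ⟨hc.1, hc.2⟩) (key.trans (top_add _))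
      tauto
    have hreal : L.toReal + Nn.toReal = Np.toReal + (-b) := by
      have h := congrArg ENNReal.toReal key
      rwa [ENNReal.toReal_add hLt hNn_ne, ENNReal.toReal_add hNpt ENNReal.ofReal_ne_top,
        ENNReal.toReal_ofReal (by linarith)] at h
    rw [ereal_coe_finite hNpt, ereal_coe_finite hNn_ne, ereal_coe_finite hLt,
      ← EReal.coe_sub, ← EReal.coe_add]
    norm_cast
    linarith

lemma genEntropy_ne_bot {V : ℝ → ℝ} {b : ℝ}
    (hb : ∀ y : ℝ, 0 ≤ y → b ≤ V y)
    (ν P : Measure Ω) [IsProbabilityMeasure P] : genEntropy V ν P ≠ ⊥ := by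
  classical
  rw [genEntropy]
  split
  · set Np := ∫⁻ ω, ENNReal.ofReal (V ((ν.rnDeriv P ω).toReal)) ∂P with hNp
    set Nn := ∫⁻ ω, ENNReal.ofReal (-V ((ν.rnDeriv P ω).toReal)) ∂P with hNn
    have hNn_ne : Nn ≠ ⊤ := by
      refine (lt_of_le_of_lt ?_ (ENNReal.ofReal_lt_top (r := -b))).ne
      calc Nn ≤ ∫⁻ _, ENNReal.ofReal (-b) ∂P :=
            lintegral_mono fun ω => ENNReal.ofReal_le_ofReal
              (by linarith [hb _ (ENNReal.toReal_nonneg (a := ν.rnDeriv P ω))])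
        _ = ENNReal.ofReal (-b) := by rw [lintegral_const, measure_univ, mul_one]
    rcases eq_or_ne Np ⊤ with h | h
    · rw [h, ereal_coe_finite hNn_ne, EReal.coe_ennreal_top, EReal.top_sub_coe]
      exact (by simp : (⊤ : EReal) ≠ ⊥)
    · rw [ereal_coe_finite hNn_ne, ereal_coe_finite h, ← EReal.coe_sub]
      exact EReal.coe_ne_bot _
  · simp

lemma ereal_mul_ne_bot {c : ℝ} (hc : 0 < c) {x : EReal} (hx : x ≠ ⊥) :
    (c : EReal) * x ≠ ⊥ := by
  induction x with
  | bot => exact absurd rfl hx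
  | coe y => rw [← EReal.coe_mul]; exact EReal.coe_ne_bot _
  | top => rw [EReal.coe_mul_top_of_pos hc]; simp

lemma ereal_smul_plus {c : ℝ} (hc : 0 < c) (x : ℝ≥0∞) (b : ℝ) :
    (c : EReal) * ((x : EReal) + (b : EReal))
      = ((ENNReal.ofReal c * x : ℝ≥0∞) : EReal) + ((c * b : ℝ) : EReal) := by
  rcases eq_or_ne x ⊤ with h | h
  · rw [h, EReal.coe_ennreal_top, EReal.top_add_coe, EReal.coe_mul_top_of_pos hc,
      ENNReal.mul_top (by simpa [ENNReal.ofReal_eq_zero] using hc : ENNReal.ofReal c ≠ 0),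
      EReal.coe_ennreal_top, EReal.top_add_coe]
  · rw [ereal_coe_finite h,
      ereal_coe_finite (ENNReal.mul_ne_top ENNReal.ofReal_ne_top h),
      ENNReal.toReal_mul, ENNReal.toReal_ofReal hc.le, ← EReal.coe_add, ← EReal.coe_mul,
      ← EReal.coe_add]
    norm_cast
    ring

end aux2
section core

variable {Ω : Type*} [MeasurableSpace Ω]

lemma isFiniteMeasure_ofReal_smul (c : ℝ) (m : Measure Ω) [IsFiniteMeasure m] :
    IsFiniteMeasure (ENNReal.ofReal c • m) :=
  ⟨by rw [Measure.smul_apply, smul_eq_mul]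
      exact ENNReal.mul_lt_top ENNReal.ofReal_lt_top (measure_lt_top m _)⟩

lemma core_ineq (μ P P' Q Q' : Measure Ω) [IsProbabilityMeasure μ]
    [IsProbabilityMeasure P] [IsProbabilityMeasure P']
    [IsProbabilityMeasure Q] [IsProbabilityMeasure Q']
    (hP : P ≪ μ) (hP' : P' ≪ μ) (hQ : Q ≪ μ) (hQ' : Q' ≪ μ)
    (hQP : Q ≪ P) (hQ'P' : Q' ≪ P')
    {W : ℝ → ℝ} (hW : ConvexOn ℝ (Set.Ici 0) W) (hWnn : ∀ y : ℝ, 0 ≤ y → 0 ≤ W y)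
    (hm : Measurable (fun y : ℝ≥0∞ => W y.toReal))
    {α γ : ℝ} (hα : α ∈ Set.Ioo (0:ℝ) 1) (hγ : γ ∈ Set.Ioo (0:ℝ) 1) :
    (∫⁻ ω, ENNReal.ofReal (W ((((ENNReal.ofReal α • Q + ENNReal.ofReal (1-α) • Q').rnDeriv
        (ENNReal.ofReal γ • P + ENNReal.ofReal (1-γ) • P')) ω).toReal))
      ∂(ENNReal.ofReal γ • P + ENNReal.ofReal (1-γ) • P'))
    ≤ ENNReal.ofReal γ
        * ∫⁻ ω, ENNReal.ofReal (W (((ENNReal.ofReal (α/γ) • Q).rnDeriv P ω).toReal)) ∂P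
      + ENNReal.ofReal (1-γ)
        * ∫⁻ ω, ENNReal.ofReal (W (((ENNReal.ofReal ((1-α)/(1-γ)) • Q').rnDeriv P' ω).toReal)) ∂P' := by
  obtain ⟨hα0, hα1⟩ := hα
  obtain ⟨hγ0, hγ1⟩ := hγ
  have h1α : (0:ℝ) < 1 - α := by linarith
  have h1γ : (0:ℝ) < 1 - γ := by linarith
  set R : Measure Ω := ENNReal.ofReal γ • P + ENNReal.ofReal (1-γ) • P' with hR
  set ν : Measure Ω := ENNReal.ofReal α • Q + ENNReal.ofReal (1-α) • Q' with hν
  haveI : IsFiniteMeasure (ENNReal.ofReal γ • P) := isFiniteMeasure_ofReal_smul _ _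
  haveI : IsFiniteMeasure (ENNReal.ofReal (1-γ) • P') := isFiniteMeasure_ofReal_smul _ _
  haveI : IsFiniteMeasure (ENNReal.ofReal α • Q) := isFiniteMeasure_ofReal_smul _ _
  haveI : IsFiniteMeasure (ENNReal.ofReal (1-α) • Q') := isFiniteMeasure_ofReal_smul _ _
  haveI : IsFiniteMeasure R := by rw [hR]; infer_instance
  haveI : IsFiniteMeasure ν := by rw [hν]; infer_instance
  haveI : IsFiniteMeasure (ENNReal.ofReal (α/γ) • Q) := isFiniteMeasure_ofReal_smul _ _
  haveI : IsFiniteMeasure (ENNReal.ofReal ((1-α)/(1-γ)) • Q') := isFiniteMeasure_ofReal_smul _ _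
  have hγne : ENNReal.ofReal γ ≠ 0 := by simp [ENNReal.ofReal_eq_zero]; linarith
  have hγ'ne : ENNReal.ofReal (1-γ) ≠ 0 := by simp [ENNReal.ofReal_eq_zero]; linarith
  -- absolute continuity facts
  have hRμ : R ≪ μ := by
    intro A hA
    rw [hR]
    simp [Measure.add_apply, Measure.smul_apply, smul_eq_mul, hP hA, hP' hA]
  have hνR : ν ≪ R := by
    intro A hA
    rw [hR] at hA
    simp only [Measure.coe_add, Pi.add_apply, Measure.smul_apply, smul_eq_mul,
      add_eq_zero, mul_eq_zero] at hA
    obtain ⟨h1, h2⟩ := hA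
    have hPA : P A = 0 := h1.resolve_left hγne
    have hP'A : P' A = 0 := h2.resolve_left hγ'ne
    rw [hν]
    simp [Measure.add_apply, Measure.smul_apply, smul_eq_mul, hQP hPA, hQ'P' hP'A]
  have hνμ : ν ≪ μ := hνR.trans hRμ
  -- density shorthand
  set p := P.rnDeriv μ with hp
  set p' := P'.rnDeriv μ with hp'
  set q := Q.rnDeriv μ with hq
  set q' := Q'.rnDeriv μ with hq'
  set g₁ := (ENNReal.ofReal (α/γ) • Q).rnDeriv P with hg₁
  set g₂ := (ENNReal.ofReal ((1-α)/(1-γ)) • Q').rnDeriv P' with hg₂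
  set f := ν.rnDeriv R with hfd
  set r := R.rnDeriv μ with hr
  -- a.e. identities
  have h_r : r =ᵐ[μ] fun ω => ENNReal.ofReal γ * p ω + ENNReal.ofReal (1-γ) * p' ω := by
    filter_upwards [Measure.rnDeriv_add (ENNReal.ofReal γ • P) (ENNReal.ofReal (1-γ) • P') μ,
      Measure.rnDeriv_smul_left_of_ne_top P μ (ENNReal.ofReal_ne_top (r := γ)),
      Measure.rnDeriv_smul_left_of_ne_top P' μ (ENNReal.ofReal_ne_top (r := 1-γ))]
      with ω e1 e2 e3
    rw [hr, hR, e1, Pi.add_apply, e2, e3, Pi.smul_apply, Pi.smul_apply, smul_eq_mul, smul_eq_mul]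
  have h_n : ν.rnDeriv μ =ᵐ[μ] fun ω => ENNReal.ofReal α * q ω + ENNReal.ofReal (1-α) * q' ω := by
    filter_upwards [Measure.rnDeriv_add (ENNReal.ofReal α • Q) (ENNReal.ofReal (1-α) • Q') μ,
      Measure.rnDeriv_smul_left_of_ne_top Q μ (ENNReal.ofReal_ne_top (r := α)),
      Measure.rnDeriv_smul_left_of_ne_top Q' μ (ENNReal.ofReal_ne_top (r := 1-α))]
      with ω e1 e2 e3
    rw [hν, e1, Pi.add_apply, e2, e3, Pi.smul_apply, Pi.smul_apply, smul_eq_mul, smul_eq_mul]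
  have h_fr : (fun ω => f ω * r ω) =ᵐ[μ] fun ω => ENNReal.ofReal α * q ω + ENNReal.ofReal (1-α) * q' ω := by
    filter_upwards [Measure.rnDeriv_mul_rnDeriv hνR, h_n] with ω e1 e2
    rw [← e2]
    exact e1
  have h_gq : (fun ω => Q.rnDeriv P ω * p ω) =ᵐ[μ] q := Measure.rnDeriv_mul_rnDeriv hQP
  have h_gq' : (fun ω => Q'.rnDeriv P' ω * p' ω) =ᵐ[μ] q' := Measure.rnDeriv_mul_rnDeriv hQ'P'
  have h_c1 : ∀ᵐ ω ∂μ, p ω ≠ 0 → g₁ ω = ENNReal.ofReal (α/γ) * Q.rnDeriv P ω := by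
    have h := Measure.rnDeriv_smul_left_of_ne_top Q P (ENNReal.ofReal_ne_top (r := α/γ))
    have h' : ∀ᵐ ω ∂(μ.withDensity p), g₁ ω = ENNReal.ofReal (α/γ) * Q.rnDeriv P ω := by
      rw [hp, Measure.withDensity_rnDeriv_eq P μ hP]
      filter_upwards [h] with ω e
      rw [hg₁, e, Pi.smul_apply, smul_eq_mul]
    exact (ae_withDensity_iff (Measure.measurable_rnDeriv P μ)).1 h'
  have h_c2 : ∀ᵐ ω ∂μ, p' ω ≠ 0 → g₂ ω = ENNReal.ofReal ((1-α)/(1-γ)) * Q'.rnDeriv P' ω := by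
    have h := Measure.rnDeriv_smul_left_of_ne_top Q' P' (ENNReal.ofReal_ne_top (r := (1-α)/(1-γ)))
    have h' : ∀ᵐ ω ∂(μ.withDensity p'), g₂ ω = ENNReal.ofReal ((1-α)/(1-γ)) * Q'.rnDeriv P' ω := by
      rw [hp', Measure.withDensity_rnDeriv_eq P' μ hP']
      filter_upwards [h] with ω e
      rw [hg₂, e, Pi.smul_apply, smul_eq_mul]
    exact (ae_withDensity_iff (Measure.measurable_rnDeriv P' μ)).1 h'
  -- integrands and their measurability
  set F₀ : Ω → ℝ≥0∞ := fun ω => ENNReal.ofReal (W ((f ω).toReal)) with hF₀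
  set F₁ : Ω → ℝ≥0∞ := fun ω => ENNReal.ofReal (W ((g₁ ω).toReal)) with hF₁
  set F₂ : Ω → ℝ≥0∞ := fun ω => ENNReal.ofReal (W ((g₂ ω).toReal)) with hF₂
  have hF₀m : Measurable F₀ :=
    ENNReal.measurable_ofReal.comp (hm.comp (Measure.measurable_rnDeriv ν R))
  have hF₁m : Measurable F₁ :=
    ENNReal.measurable_ofReal.comp (hm.comp (Measure.measurable_rnDeriv _ P))
  have hF₂m : Measurable F₂ :=
    ENNReal.measurable_ofReal.comp (hm.comp (Measure.measurable_rnDeriv _ P'))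
  -- lift lintegrals to μ
  have hlift : ∀ (m : Measure Ω), IsFiniteMeasure m → m ≪ μ → ∀ F : Ω → ℝ≥0∞, Measurable F →
      ∫⁻ ω, F ω ∂m = ∫⁻ ω, m.rnDeriv μ ω * F ω ∂μ := by
    intro m hmfin hmμ F hF
    haveI := hmfin
    conv_lhs => rw [← Measure.withDensity_rnDeriv_eq m μ hmμ]
    exact lintegral_withDensity_eq_lintegral_mul μ (Measure.measurable_rnDeriv m μ) hF
  have e0 : ∫⁻ ω, F₀ ω ∂(R) = ∫⁻ ω, r ω * F₀ ω ∂μ := hlift R inferInstance hRμ F₀ hF₀m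
  have e1 : ∫⁻ ω, F₁ ω ∂P = ∫⁻ ω, p ω * F₁ ω ∂μ := hlift P inferInstance hP F₁ hF₁m
  have e2 : ∫⁻ ω, F₂ ω ∂P' = ∫⁻ ω, p' ω * F₂ ω ∂μ := hlift P' inferInstance hP' F₂ hF₂m
  show ∫⁻ ω, F₀ ω ∂(R) ≤ ENNReal.ofReal γ * ∫⁻ ω, F₁ ω ∂P + ENNReal.ofReal (1-γ) * ∫⁻ ω, F₂ ω ∂P'
  rw [e0, e1, e2, ← lintegral_const_mul (f := fun ω => p ω * F₁ ω) _ ((Measure.measurable_rnDeriv P μ).mul hF₁m),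
    ← lintegral_const_mul (f := fun ω => p' ω * F₂ ω) _ ((Measure.measurable_rnDeriv P' μ).mul hF₂m),
    ← lintegral_add_left (f := fun ω => ENNReal.ofReal γ * (p ω * F₁ ω)) (measurable_const.mul ((Measure.measurable_rnDeriv P μ).mul hF₁m))]
  refine lintegral_mono_ae ?_
  -- the pointwise inequality
  filter_upwards [h_r, h_fr, h_gq, h_gq', h_c1, h_c2,
    Measure.rnDeriv_ne_top P μ, Measure.rnDeriv_ne_top P' μ,
    Measure.rnDeriv_ne_top Q μ, Measure.rnDeriv_ne_top Q' μ]
    with ω e_r e_n e_q e_q' c1 c2 hpt hp't hqt hq't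
  by_cases hr0 : r ω = 0
  · simp [hr0]
  -- now r ω ≠ 0
  have hrt : r ω ≠ ⊤ := by
    rw [e_r]
    exact ENNReal.add_ne_top.2 ⟨ENNReal.mul_ne_top ENNReal.ofReal_ne_top hpt,
      ENNReal.mul_ne_top ENNReal.ofReal_ne_top hp't⟩
  have hft : f ω ≠ ⊤ := by
    intro h
    have : f ω * r ω = ⊤ := by rw [h, ENNReal.top_mul hr0]
    rw [e_n] at this
    exact (ENNReal.add_ne_top.2 ⟨ENNReal.mul_ne_top ENNReal.ofReal_ne_top hqt,
      ENNReal.mul_ne_top ENNReal.ofReal_ne_top hq't⟩) this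
  set pr := (p ω).toReal with hpr
  set pr' := (p' ω).toReal with hpr'
  set qr := (q ω).toReal with hqr
  set qr' := (q' ω).toReal with hqr'
  set rr := (r ω).toReal with hrr
  set fr := (f ω).toReal with hfr
  set x₁ := (g₁ ω).toReal with hx₁
  set x₂ := (g₂ ω).toReal with hx₂
  have e_rr : rr = γ * pr + (1-γ) * pr' := by
    rw [hrr, e_r, ENNReal.toReal_add (ENNReal.mul_ne_top ENNReal.ofReal_ne_top hpt)
      (ENNReal.mul_ne_top ENNReal.ofReal_ne_top hp't), ENNReal.toReal_mul, ENNReal.toReal_mul,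
      ENNReal.toReal_ofReal hγ0.le, ENNReal.toReal_ofReal h1γ.le]
  have e_frr : fr * rr = α * qr + (1-α) * qr' := by
    rw [hfr, hrr, ← ENNReal.toReal_mul, e_n,
      ENNReal.toReal_add (ENNReal.mul_ne_top ENNReal.ofReal_ne_top hqt)
        (ENNReal.mul_ne_top ENNReal.ofReal_ne_top hq't),
      ENNReal.toReal_mul, ENNReal.toReal_mul,
      ENNReal.toReal_ofReal hα0.le, ENNReal.toReal_ofReal h1α.le]
  have hrr_pos : 0 < rr := ENNReal.toReal_pos hr0 hrt
  have hWx₁ : 0 ≤ W x₁ := hWnn _ ENNReal.toReal_nonneg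
  have hWx₂ : 0 ≤ W x₂ := hWnn _ ENNReal.toReal_nonneg
  have hWfr : 0 ≤ W fr := hWnn _ ENNReal.toReal_nonneg
  have hprnn : (0:ℝ) ≤ pr := by rw [hpr]; exact ENNReal.toReal_nonneg
  have hpr'nn : (0:ℝ) ≤ pr' := by rw [hpr']; exact ENNReal.toReal_nonneg
  have hqrnn : (0:ℝ) ≤ qr := by rw [hqr]; exact ENNReal.toReal_nonneg
  have hqr'nn : (0:ℝ) ≤ qr' := by rw [hqr']; exact ENNReal.toReal_nonneg
  have hrrnn : (0:ℝ) ≤ rr := by rw [hrr]; exact ENNReal.toReal_nonneg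
  have hrof : ENNReal.ofReal rr = r ω := by rw [hrr]; exact ENNReal.ofReal_toReal hrt
  have hpof : ENNReal.ofReal pr = p ω := by rw [hpr]; exact ENNReal.ofReal_toReal hpt
  have hp'of : ENNReal.ofReal pr' = p' ω := by rw [hpr']; exact ENNReal.ofReal_toReal hp't
  -- rewrite goal as ofReal of a real inequality
  have hLHS : r ω * F₀ ω = ENNReal.ofReal (rr * W fr) := by
    rw [ENNReal.ofReal_mul hrrnn, hrof]
  have hRHS1 : ENNReal.ofReal γ * (p ω * F₁ ω) = ENNReal.ofReal (γ * (pr * W x₁)) := by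
    rw [ENNReal.ofReal_mul hγ0.le, ENNReal.ofReal_mul hprnn, hpof]
  have hRHS2 : ENNReal.ofReal (1-γ) * (p' ω * F₂ ω) = ENNReal.ofReal ((1-γ) * (pr' * W x₂)) := by
    rw [ENNReal.ofReal_mul h1γ.le, ENNReal.ofReal_mul hpr'nn, hp'of]
  show r ω * F₀ ω ≤ ENNReal.ofReal γ * (p ω * F₁ ω) + ENNReal.ofReal (1-γ) * (p' ω * F₂ ω)
  rw [hLHS, hRHS1, hRHS2, ← ENNReal.ofReal_add (by positivity) (by positivity)]
  apply ENNReal.ofReal_le_ofReal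
  -- the real inequality
  by_cases hp0 : p ω = 0
  · -- then q ω = 0, force the second component
    have hq0 : q ω = 0 := by rw [← e_q, hp0, mul_zero]
    have hpr0 : pr = 0 := by rw [hpr, hp0, ENNReal.toReal_zero]
    have hqr0 : qr = 0 := by rw [hqr, hq0, ENNReal.toReal_zero]
    have hp'0 : p' ω ≠ 0 := by
      intro h
      apply hr0
      rw [e_r, hp0, h, mul_zero, mul_zero, add_zero]
    have hpr'pos : 0 < pr' := ENNReal.toReal_pos hp'0 hp't
    have hQ't : Q'.rnDeriv P' ω ≠ ⊤ := by
      intro h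
      rw [h, ENNReal.top_mul hp'0] at e_q'
      exact hq't e_q'.symm
    have hx₂v : x₂ = ((1-α)/(1-γ)) * (qr'/pr') := by
      have hQPr : (Q'.rnDeriv P' ω).toReal * pr' = qr' := by
        rw [hpr', hqr', ← ENNReal.toReal_mul, e_q']
      rw [hx₂, c2 hp'0, ENNReal.toReal_mul, ENNReal.toReal_ofReal (by positivity)]
      congr 1
      field_simp [hpr'pos.ne'] at hQPr ⊢
      linarith
    have hrrv : rr = (1-γ) * pr' := by rw [e_rr, hpr0]; ring
    have hfrv : fr = x₂ := by
      have h1 : fr * rr = (1-α) * qr' := by rw [e_frr, hqr0]; ring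
      rw [hrrv] at h1
      rw [hx₂v]
      field_simp at h1 ⊢
      rw [mul_comm] at h1
      rw [← h1]
      ring
    rw [hfrv, hrrv, hpr0]
    ring_nf
    exact le_refl _
  by_cases hp'0 : p' ω = 0
  · -- symmetric
    have hq'0 : q' ω = 0 := by rw [← e_q', hp'0, mul_zero]
    have hpr'0 : pr' = 0 := by rw [hpr', hp'0, ENNReal.toReal_zero]
    have hqr'0 : qr' = 0 := by rw [hqr', hq'0, ENNReal.toReal_zero]
    have hprpos : 0 < pr := ENNReal.toReal_pos hp0 hpt
    have hQt : Q.rnDeriv P ω ≠ ⊤ := by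
      intro h
      rw [h, ENNReal.top_mul hp0] at e_q
      exact hqt e_q.symm
    have hx₁v : x₁ = (α/γ) * (qr/pr) := by
      have hQPr : (Q.rnDeriv P ω).toReal * pr = qr := by
        rw [hpr, hqr, ← ENNReal.toReal_mul, e_q]
      rw [hx₁, c1 hp0, ENNReal.toReal_mul, ENNReal.toReal_ofReal (by positivity)]
      congr 1
      field_simp [hprpos.ne'] at hQPr ⊢
      linarith
    have hrrv : rr = γ * pr := by rw [e_rr, hpr'0]; ring
    have hfrv : fr = x₁ := by
      have h1 : fr * rr = α * qr := by rw [e_frr, hqr'0]; ring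
      rw [hrrv] at h1
      rw [hx₁v]
      field_simp at h1 ⊢
      rw [mul_comm] at h1
      rw [← h1]
      ring
    rw [hfrv, hrrv, hpr'0]
    ring_nf
    exact le_refl _
  · -- main case : both positive, use convexity
    have hprpos : 0 < pr := ENNReal.toReal_pos hp0 hpt
    have hpr'pos : 0 < pr' := ENNReal.toReal_pos hp'0 hp't
    have hQt : Q.rnDeriv P ω ≠ ⊤ := by
      intro h
      rw [h, ENNReal.top_mul hp0] at e_q
      exact hqt e_q.symm
    have hQ't : Q'.rnDeriv P' ω ≠ ⊤ := by
      intro h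
      rw [h, ENNReal.top_mul hp'0] at e_q'
      exact hq't e_q'.symm
    have hx₁v : x₁ = (α/γ) * (qr/pr) := by
      have hQPr : (Q.rnDeriv P ω).toReal * pr = qr := by
        rw [hpr, hqr, ← ENNReal.toReal_mul, e_q]
      rw [hx₁, c1 hp0, ENNReal.toReal_mul, ENNReal.toReal_ofReal (by positivity)]
      congr 1
      field_simp [hprpos.ne'] at hQPr ⊢
      linarith
    have hx₂v : x₂ = ((1-α)/(1-γ)) * (qr'/pr') := by
      have hQPr : (Q'.rnDeriv P' ω).toReal * pr' = qr' := by
        rw [hpr', hqr', ← ENNReal.toReal_mul, e_q']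
      rw [hx₂, c2 hp'0, ENNReal.toReal_mul, ENNReal.toReal_ofReal (by positivity)]
      congr 1
      field_simp [hpr'pos.ne'] at hQPr ⊢
      linarith
    set t := γ * pr / rr with ht
    set s := (1-γ) * pr' / rr with hs
    have ht0 : 0 ≤ t := by positivity
    have hs0 : 0 ≤ s := by positivity
    have hts : t + s = 1 := by
      rw [ht, hs, ← add_div, e_rr, div_self (by rw [← e_rr]; exact hrr_pos.ne')]
    have hfrv : fr = t * x₁ + s * x₂ := by
      have h1 : fr = (α * qr + (1-α) * qr') / rr := by
        rw [← e_frr]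
        field_simp
      rw [h1, ht, hs, hx₁v, hx₂v]
      field_simp
    have hconv := hW.2 (Set.mem_Ici.2 (ENNReal.toReal_nonneg : (0:ℝ) ≤ x₁))
      (Set.mem_Ici.2 (ENNReal.toReal_nonneg : (0:ℝ) ≤ x₂)) ht0 hs0 hts
    simp only [smul_eq_mul] at hconv
    have hkey : W fr ≤ t * W x₁ + s * W x₂ := by rw [hfrv]; exact hconv
    have hmul := mul_le_mul_of_nonneg_left hkey hrr_pos.le
    calc rr * W fr ≤ rr * (t * W x₁ + s * W x₂) := hmul
      _ = γ * (pr * W x₁) + (1-γ) * (pr' * W x₂) := by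
          rw [ht, hs]
          field_simp

end core

/-- Lemma 5.4 (`ConseqRAE`), main inequality: for probability measures `Q, Q', P, P' ≪ μ`
and a convex, bounded-below `V` (finite on `(0,∞)`),
`V(αQ + (1−α)Q' | γP + (1−γ)P') ≤ γ V((α/γ)Q|P) + (1−γ) V(((1−α)/(1−γ))Q'|P')`. -/
theorem stmt_3 {Ω : Type*} [MeasurableSpace Ω]
    (μ P P' Q Q' : Measure Ω) [IsProbabilityMeasure μ]
    [IsProbabilityMeasure P] [IsProbabilityMeasure P']
    [IsProbabilityMeasure Q] [IsProbabilityMeasure Q']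
    (hP : P ≪ μ) (hP' : P' ≪ μ) (hQ : Q ≪ μ) (hQ' : Q' ≪ μ)
    (V : ℝ → ℝ) (hVconv : ConvexOn ℝ (Set.Ici 0) V)
    (hVbdd : ∃ b : ℝ, ∀ y : ℝ, 0 ≤ y → b ≤ V y) :
    ∀ α γ : ℝ, α ∈ Set.Ioo (0:ℝ) 1 → γ ∈ Set.Ioo (0:ℝ) 1 →
      genEntropy V (ENNReal.ofReal α • Q + ENNReal.ofReal (1 - α) • Q')
          (ENNReal.ofReal γ • P + ENNReal.ofReal (1 - γ) • P')
        ≤ (γ : EReal) * genEntropy V (ENNReal.ofReal (α / γ) • Q) P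
          + ((1 - γ : ℝ) : EReal) * genEntropy V (ENNReal.ofReal ((1 - α) / (1 - γ)) • Q') P' := by
  intro α γ hαIoo hγIoo
  obtain ⟨hα0, hα1⟩ := hαIoo
  obtain ⟨hγ0, hγ1⟩ := hγIoo
  have h1α : (0:ℝ) < 1 - α := by linarith
  have h1γ : (0:ℝ) < 1 - γ := by linarith
  obtain ⟨b₀, hb₀⟩ := hVbdd
  set b := min b₀ 0 with hbdef
  have hb0 : b ≤ 0 := min_le_right _ _
  have hbV : ∀ y : ℝ, 0 ≤ y → b ≤ V y := fun y hy => le_trans (min_le_left _ _) (hb₀ y hy)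
  have hmV : Measurable (fun y : ℝ≥0∞ => V y.toReal) := convex_measurable_aux hVconv
  have hc₁0 : ENNReal.ofReal (α/γ) ≠ 0 := by
    simp only [ne_eq, ENNReal.ofReal_eq_zero, not_le]
    positivity
  have hc₂0 : ENNReal.ofReal ((1-α)/(1-γ)) ≠ 0 := by
    simp only [ne_eq, ENNReal.ofReal_eq_zero, not_le]
    positivity
  by_cases hQP : Q ≪ P
  · by_cases hQ'P' : Q' ≪ P'
    · -- main case
      set R : Measure Ω := ENNReal.ofReal γ • P + ENNReal.ofReal (1-γ) • P' with hR
      set ν : Measure Ω := ENNReal.ofReal α • Q + ENNReal.ofReal (1-α) • Q' with hν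
      have hγne : ENNReal.ofReal γ ≠ 0 := by
        simp only [ne_eq, ENNReal.ofReal_eq_zero, not_le]; exact hγ0
      have hγ'ne : ENNReal.ofReal (1-γ) ≠ 0 := by
        simp only [ne_eq, ENNReal.ofReal_eq_zero, not_le]; exact h1γ
      haveI hRprob : IsProbabilityMeasure R := by
        constructor
        rw [hR, Measure.add_apply, Measure.smul_apply, Measure.smul_apply, measure_univ,
          measure_univ, smul_eq_mul, smul_eq_mul, mul_one, mul_one,
          ← ENNReal.ofReal_add hγ0.le (by linarith)]
        norm_num
      have hνR : ν ≪ R := by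
        intro A hA
        rw [hR] at hA
        simp only [Measure.coe_add, Pi.add_apply, Measure.smul_apply, smul_eq_mul,
          add_eq_zero, mul_eq_zero] at hA
        obtain ⟨h1, h2⟩ := hA
        have hPA : P A = 0 := h1.resolve_left hγne
        have hP'A : P' A = 0 := h2.resolve_left hγ'ne
        rw [hν]
        simp [Measure.add_apply, Measure.smul_apply, smul_eq_mul, hQP hPA, hQ'P' hP'A]
      have hc₁Q : ENNReal.ofReal (α/γ) • Q ≪ P := by
        intro A hA
        rw [Measure.smul_apply, hQP hA, smul_eq_mul, mul_zero]
      have hc₂Q' : ENNReal.ofReal ((1-α)/(1-γ)) • Q' ≪ P' := by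
        intro A hA
        rw [Measure.smul_apply, hQ'P' hA, smul_eq_mul, mul_zero]
      have hWconv : ConvexOn ℝ (Set.Ici 0) (fun y => V y - b) :=
        hVconv.sub (concaveOn_const _ (convex_Ici 0))
      have hWnn : ∀ y : ℝ, 0 ≤ y → 0 ≤ (fun y => V y - b) y :=
        fun y hy => sub_nonneg.2 (hbV y hy)
      have hmW : Measurable (fun y : ℝ≥0∞ => (fun y => V y - b) y.toReal) :=
        hmV.sub measurable_const
      have key := core_ineq μ P P' Q Q' hP hP' hQ hQ' hQP hQ'P' hWconv hWnn hmW
        ⟨hα0, hα1⟩ ⟨hγ0, hγ1⟩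
      rw [genEntropy_of_ac hb0 hbV hmV ν R hνR,
        genEntropy_of_ac hb0 hbV hmV _ P hc₁Q,
        genEntropy_of_ac hb0 hbV hmV _ P' hc₂Q',
        ereal_smul_plus hγ0, ereal_smul_plus h1γ, add_add_add_comm]
      have hbsum : ((γ*b : ℝ) : EReal) + (((1-γ)*b : ℝ) : EReal) = (b : EReal) := by
        rw [← EReal.coe_add]
        congr 1
        ring
      rw [hbsum, ← EReal.coe_ennreal_add]
      refine add_le_add_left ?_ _
      exact EReal.coe_ennreal_le_coe_ennreal_iff.2 key
    · -- Q' not ≪ P' : RHS is ⊤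
      have hnot : ¬ (ENNReal.ofReal ((1-α)/(1-γ)) • Q' ≪ P') := by
        intro h
        apply hQ'P'
        intro A hA
        have h2 := h hA
        rw [Measure.smul_apply, smul_eq_mul] at h2
        exact (mul_eq_zero.mp h2).resolve_left hc₂0
      have hT : genEntropy V (ENNReal.ofReal ((1-α)/(1-γ)) • Q') P' = ⊤ := by
        rw [genEntropy, if_neg hnot]
      rw [hT, EReal.coe_mul_top_of_pos h1γ,
        EReal.add_top_of_ne_bot (ereal_mul_ne_bot hγ0 (genEntropy_ne_bot hbV _ _))]
      exact le_top
  · -- Q not ≪ P : RHS is ⊤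
    have hnot : ¬ (ENNReal.ofReal (α/γ) • Q ≪ P) := by
      intro h
      apply hQP
      intro A hA
      have h2 := h hA
      rw [Measure.smul_apply, smul_eq_mul] at h2
      exact (mul_eq_zero.mp h2).resolve_left hc₁0
    have hT : genEntropy V (ENNReal.ofReal (α/γ) • Q) P = ⊤ := by
      rw [genEntropy, if_neg hnot]
    rw [hT, EReal.coe_mul_top_of_pos hγ0,
      EReal.top_add_of_ne_bot (ereal_mul_ne_bot h1γ (genEntropy_ne_bot hbV _ _))]
    exact le_top
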